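/- arXiv:1504.02155 — 4 statements merged into one kernel-verified Lean document; each statement's English description precedes it below -/
import Mathlib

section
/- Let V ∈ ℝ^{r×r} be symmetric positive semidefinite, and let A₁₁, N₁₁ ∈ ℝ^{r×r} satisfy A₁₁V + VA₁₁ᵀ + N₁₁VN₁₁ᵀ = 0. Then the kernel of V is invariant under A₁₁ᵀ and under N₁₁ᵀ, and consequently the image of V is invariant under A₁₁ and under N₁₁. -/
open Matrix

lemma range_helper {r : ℕ} (V : Matrix (Fin r) (Fin r) ℝ) (hV : V.PosSemidef)
    (b : Fin r → ℝ) (hb : ∀ y : Fin r → ℝ, V.mulVec y = 0 → y ⬝ᵥ b = 0) :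
    ∃ u, b = V.mulVec u := by
  let K : Submodule ℝ (EuclideanSpace ℝ (Fin r)) := LinearMap.range (Matrix.toEuclideanLin V)
  obtain ⟨w, hw, w', hw', hsum⟩ := K.exists_add_mem_mem_orthogonal (WithLp.toLp 2 b : EuclideanSpace ℝ (Fin r))
  have hinner : ∀ x y : EuclideanSpace ℝ (Fin r), (inner ℝ x y : ℝ) = x.ofLp ⬝ᵥ y.ofLp := by
    intro x y
    rw [PiLp.inner_apply]
    simp [dotProduct, RCLike.inner_apply, mul_comm]
  have horth : ∀ x ∈ K, x.ofLp ⬝ᵥ w'.ofLp = 0 := fun x hx =>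
    (hinner x w') ▸ ((Submodule.mem_orthogonal K w').mp hw' x hx)
  have hVw' : V.mulVec w'.ofLp = 0 := by
    have h1 : (V.mulVec w'.ofLp) ⬝ᵥ w'.ofLp = 0 := by simpa using horth _ ⟨w', rfl⟩
    rw [← hV.dotProduct_mulVec_zero_iff w'.ofLp]
    simpa [dotProduct_comm] using h1
  have hwb : w'.ofLp ⬝ᵥ b = 0 := hb _ hVw'
  have hww : w'.ofLp ⬝ᵥ w.ofLp = 0 := by rw [dotProduct_comm]; exact horth w hw
  have hw'0 : w'.ofLp = (0 : Fin r → ℝ) := by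
    have h2 : w'.ofLp ⬝ᵥ w'.ofLp = 0 := by
      have h3 := congrArg (fun v : EuclideanSpace ℝ (Fin r) => w'.ofLp ⬝ᵥ v.ofLp) hsum
      have h4 : w'.ofLp ⬝ᵥ (w.ofLp + w'.ofLp) = w'.ofLp ⬝ᵥ w.ofLp + w'.ofLp ⬝ᵥ w'.ofLp := dotProduct_add _ _ _
      simp only [WithLp.ofLp_add] at h3
      rw [hwb, h4, hww] at h3
      linarith
    exact (dotProduct_self_eq_zero).mp h2
  obtain ⟨u, hu⟩ := hw
  refine ⟨u.ofLp, ?_⟩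
  have : b = w.ofLp + w'.ofLp := by simpa using congrArg WithLp.ofLp hsum
  rw [this, hw'0, add_zero, ← hu]
  simp

theorem stmt_7 {r : ℕ} (V A₁₁ N₁₁ : Matrix (Fin r) (Fin r) ℝ)
    (hV : V.PosSemidef)
    (heq : A₁₁ * V + V * A₁₁ᵀ + N₁₁ * V * N₁₁ᵀ = 0) :
    (∀ z : Fin r → ℝ, V.mulVec z = 0 →
        V.mulVec (A₁₁ᵀ.mulVec z) = 0 ∧ V.mulVec (N₁₁ᵀ.mulVec z) = 0) ∧
    (∀ z : Fin r → ℝ,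
        (∃ u, A₁₁.mulVec (V.mulVec z) = V.mulVec u) ∧
        (∃ u, N₁₁.mulVec (V.mulVec z) = V.mulVec u)) := by
  have hVt : Vᵀ = V := by simpa [Matrix.IsSymm] using hV.1
  have hsymm : ∀ x w : Fin r → ℝ, x ⬝ᵥ V.mulVec w = (V.mulVec x) ⬝ᵥ w := by
    intro x w
    rw [dotProduct_mulVec, ← mulVec_transpose, hVt]
  have htr : ∀ (M : Matrix (Fin r) (Fin r) ℝ) (x w : Fin r → ℝ),
      x ⬝ᵥ M.mulVec w = (Mᵀ.mulVec x) ⬝ᵥ w := by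
    intro M x w
    rw [dotProduct_mulVec, ← mulVec_transpose]
  have part1 : ∀ z : Fin r → ℝ, V.mulVec z = 0 →
      V.mulVec (A₁₁ᵀ.mulVec z) = 0 ∧ V.mulVec (N₁₁ᵀ.mulVec z) = 0 := by
    intro z hz
    have h0 := congrArg (fun M : Matrix (Fin r) (Fin r) ℝ => M.mulVec z) heq
    simp only [add_mulVec, zero_mulVec, ← mulVec_mulVec] at h0
    rw [hz, mulVec_zero] at h0
    have h1 : V.mulVec (A₁₁ᵀ.mulVec z) + N₁₁.mulVec (V.mulVec (N₁₁ᵀ.mulVec z)) = 0 := by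
      linear_combination (norm := module) h0
    have hNz : V.mulVec (N₁₁ᵀ.mulVec z) = 0 := by
      have h2 := congrArg (fun v : Fin r → ℝ => z ⬝ᵥ v) h1
      rw [dotProduct_add, hsymm, hz, zero_dotProduct, zero_add, htr, dotProduct_zero] at h2
      rw [← hV.dotProduct_mulVec_zero_iff]
      simpa using h2
    refine ⟨?_, hNz⟩
    rw [hNz, mulVec_zero, add_zero] at h1
    exact h1
  refine ⟨part1, fun z => ⟨?_, ?_⟩⟩
  · obtain ⟨u, hu⟩ := range_helper V hV (A₁₁.mulVec (V.mulVec z)) (fun y hy => by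
      rw [htr, hsymm, (part1 y hy).1, zero_dotProduct])
    exact ⟨u, hu⟩
  · obtain ⟨u, hu⟩ := range_helper V hV (N₁₁.mulVec (V.mulVec z)) (fun y hy => by
      rw [htr, hsymm, (part1 y hy).2, zero_dotProduct])
    exact ⟨u, hu⟩
end

section
/- Let a > 1, A = diag(-1, -a²), N = [[0,0],[1,0]], B = (1,0)ᵀ, C = (0,1). Then P = diag(1/2, 1/(4a²)) and Q = diag(1/(4a²), 1/(2a²)) satisfy the type I Lyapunov equations AP + PAᵀ + NPNᵀ = -BBᵀ and AᵀQ + QA + NᵀQN = -CᵀC, and the eigenvalues of PQ are 1/(8a²) and 1/(8a⁴), giving Hankel singular values σ₁ = 1/(√8·a) and σ₂ = 1/(√8·a²). -/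
open Matrix

lemma spec_diag2 (x y : ℝ) :
    spectrum ℝ (!![x, 0; 0, y] : Matrix (Fin 2) (Fin 2) ℝ) = {x, y} := by
  ext μ
  rw [spectrum.mem_iff, Matrix.isUnit_iff_isUnit_det]
  have h : (algebraMap ℝ (Matrix (Fin 2) (Fin 2) ℝ)) μ - !![x, 0; 0, y]
      = !![μ - x, 0; 0, μ - y] := by
    ext i j
    fin_cases i <;> fin_cases j <;>
      simp [Matrix.algebraMap_eq_diagonal, Matrix.diagonal]
  rw [h, Matrix.det_fin_two_of, isUnit_iff_ne_zero]
  simp only [mul_zero, sub_zero]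
  constructor
  · intro hmu
    rcases mul_eq_zero.mp (not_not.mp hmu) with h1 | h1
    · exact Or.inl (by linarith [sub_eq_zero.mp h1])
    · exact Or.inr (by simp [sub_eq_zero.mp h1])
  · rintro (rfl | h1) h2
    · simp at h2
    · simp at h1; subst h1; simp at h2

theorem stmt_14 (a : ℝ) (ha : 1 < a) :
    let A : Matrix (Fin 2) (Fin 2) ℝ := !![-1, 0; 0, -a ^ 2]
    let N : Matrix (Fin 2) (Fin 2) ℝ := !![0, 0; 1, 0]
    let B : Matrix (Fin 2) (Fin 1) ℝ := !![1; 0]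
    let C : Matrix (Fin 1) (Fin 2) ℝ := !![0, 1]
    let P : Matrix (Fin 2) (Fin 2) ℝ := !![1 / 2, 0; 0, 1 / (4 * a ^ 2)]
    let Q : Matrix (Fin 2) (Fin 2) ℝ := !![1 / (4 * a ^ 2), 0; 0, 1 / (2 * a ^ 2)]
    A * P + P * Aᵀ + N * P * Nᵀ = -(B * Bᵀ) ∧
    Aᵀ * Q + Q * A + Nᵀ * Q * N = -(Cᵀ * C) ∧
    spectrum ℝ (P * Q) = {1 / (8 * a ^ 2), 1 / (8 * a ^ 4)} ∧
    (1 / (Real.sqrt 8 * a)) ^ 2 = 1 / (8 * a ^ 2) ∧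
    (1 / (Real.sqrt 8 * a ^ 2)) ^ 2 = 1 / (8 * a ^ 4) := by
  intro A N B C P Q
  have ha0 : a ≠ 0 := by positivity
  have ha2 : a ^ 2 ≠ 0 := by positivity
  refine ⟨?_, ?_, ?_, ?_, ?_⟩
  · ext i j
    fin_cases i <;> fin_cases j <;>
      simp [A, N, B, P, Matrix.mul_apply, Fin.sum_univ_two, Matrix.transpose_apply, Matrix.vecHead, Matrix.vecTail, Matrix.vecMul, dotProduct] <;> field_simp <;> ring
  · ext i j
    fin_cases i <;> fin_cases j <;>
      simp [A, N, C, Q, Matrix.mul_apply, Fin.sum_univ_two, Matrix.transpose_apply, Matrix.vecHead, Matrix.vecTail] <;> field_simp <;> ring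
  · have hPQ : P * Q = !![1 / (8 * a ^ 2), 0; 0, 1 / (8 * a ^ 4)] := by
      ext i j
      fin_cases i <;> fin_cases j <;>
        simp [P, Q, Matrix.mul_apply, Fin.sum_univ_two] <;> field_simp <;> ring_nf
    rw [hPQ, spec_diag2]
  · have h8 : (Real.sqrt 8) ^ 2 = 8 := Real.sq_sqrt (by norm_num)
    field_simp
    rw [h8]
  · have h8 : (Real.sqrt 8) ^ 2 = 8 := Real.sq_sqrt (by norm_num)
    field_simp
    rw [h8]
end

section
/- Let a > 1, A = diag(-1, -a²), N = [[0,0],[1,0]], B = (1,0)ᵀ, C = (0,1). Suppose γ > 0 and there exists a symmetric matrix X = [[x₁, x₂],[x₂, x₃]] ≺ 0 such that AᵀX + XA + NᵀXN - CᵀC - γ⁻²XBBᵀX ≻ 0. Then γ > 1/(√2·a). -/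
open Matrix

theorem stmt_15 (a : ℝ) (ha : 1 < a) (γ : ℝ) (hγ : 0 < γ) (x₁ x₂ x₃ : ℝ)
    (hXneg : (-(!![x₁, x₂; x₂, x₃] : Matrix (Fin 2) (Fin 2) ℝ)).PosDef)
    (hRic :
      let A : Matrix (Fin 2) (Fin 2) ℝ := !![-1, 0; 0, -a ^ 2]
      let N : Matrix (Fin 2) (Fin 2) ℝ := !![0, 0; 1, 0]
      let B : Matrix (Fin 2) (Fin 1) ℝ := !![1; 0]
      let C : Matrix (Fin 1) (Fin 2) ℝ := !![0, 1]
      let X : Matrix (Fin 2) (Fin 2) ℝ := !![x₁, x₂; x₂, x₃]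
      (Aᵀ * X + X * A + Nᵀ * X * N - Cᵀ * C - γ⁻¹ ^ 2 • (X * B * Bᵀ * X)).PosDef) :
    γ > 1 / (Real.sqrt 2 * a) := by
  have h := hRic
  simp only at h
  have h0 := h.dotProduct_mulVec_pos (x := ![1, 0]) (fun hz => by simpa using congrFun hz 0)
  have h1 := h.dotProduct_mulVec_pos (x := ![0, 1]) (fun hz => by simpa using congrFun hz 1)
  simp [dotProduct, mulVec, vecMul, Fin.sum_univ_two, Matrix.mul_apply, Fin.sum_univ_one,
    Matrix.transpose_apply, Matrix.vecHead, Matrix.vecTail] at h0 h1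
  have hγ2 : (0:ℝ) < γ ^ 2 := by positivity
  have ha0 : (0:ℝ) < a := by linarith
  -- clear inverses
  have h0' : x₁ * x₁ < γ ^ 2 * (-x₁ + -x₁ + x₃) := by
    have := mul_lt_mul_of_pos_left h0 hγ2
    rwa [← mul_assoc, mul_inv_cancel₀ (ne_of_gt hγ2), one_mul] at this
  have h1' : x₂ * x₂ < γ ^ 2 * (-(a ^ 2 * x₃) + -(x₃ * a ^ 2) - 1) := by
    have := mul_lt_mul_of_pos_left h1 hγ2
    rwa [← mul_assoc, mul_inv_cancel₀ (ne_of_gt hγ2), one_mul] at this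
  -- x₃ < -1/(2a²) i.e. 2a²x₃ < -1
  have hx3 : 2 * a ^ 2 * x₃ < -1 := by nlinarith [sq_nonneg x₂]
  have hkey : 1 < 2 * a ^ 2 * γ ^ 2 := by
    nlinarith [sq_nonneg (x₁ + γ ^ 2), sq_nonneg a, mul_pos hγ2 hγ2]
  have h2 : Real.sqrt 2 ^ 2 = 2 := Real.sq_sqrt (by norm_num)
  have hs : (0:ℝ) < Real.sqrt 2 := Real.sqrt_pos.mpr (by norm_num)
  rw [gt_iff_lt, div_lt_iff₀ (by positivity)]
  nlinarith [mul_pos (mul_pos hγ hs) ha0, sq_nonneg (γ * (Real.sqrt 2 * a) - 1)]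
end

section
/- Let a > 1, p ∈ (0,1], A = diag(-1, -a²), N = [[0,0],[1,0]], B = (1,0)ᵀ. Then P = diag(1/(1+√(1-p)), 1/p) ≻ 0 satisfies AᵀP⁻¹ + P⁻¹A + NᵀP⁻¹N ⪯ -P⁻¹BBᵀP⁻¹. -/
open Matrix

theorem stmt_16 (a p : ℝ) (ha : 1 < a) (hp : p ∈ Set.Ioc (0 : ℝ) 1) :
    let A : Matrix (Fin 2) (Fin 2) ℝ := !![-1, 0; 0, -a ^ 2]
    let N : Matrix (Fin 2) (Fin 2) ℝ := !![0, 0; 1, 0]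
    let B : Matrix (Fin 2) (Fin 1) ℝ := !![1; 0]
    let P : Matrix (Fin 2) (Fin 2) ℝ :=
      !![1 / (1 + Real.sqrt (1 - p)), 0; 0, 1 / p]
    P.PosDef ∧
    ((-(P⁻¹ * B * Bᵀ * P⁻¹)) - (Aᵀ * P⁻¹ + P⁻¹ * A + Nᵀ * P⁻¹ * N)).PosSemidef := by
  obtain ⟨hp0, hp1⟩ := hp
  intro A N B P
  set s := Real.sqrt (1 - p) with hs
  have hs0 : 0 ≤ s := Real.sqrt_nonneg _
  have hs2 : s ^ 2 = 1 - p := by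
    rw [hs, sq]; exact Real.mul_self_sqrt (by linarith)
  have h1s : 0 < 1 + s := by linarith
  have hPd : P = Matrix.diagonal ![1 / (1 + s), 1 / p] := by
    ext i j; fin_cases i <;> fin_cases j <;> simp [P, hs]
  have hPinv : P⁻¹ = !![1 + s, 0; 0, p] := by
    apply Matrix.inv_eq_right_inv
    ext i j
    fin_cases i <;> fin_cases j <;>
      simp [P, Matrix.mul_apply, Fin.sum_univ_two, Matrix.one_apply] <;>
      field_simp <;> rfl
  constructor
  · rw [hPd]
    refine Matrix.posDef_diagonal_iff.mpr fun i => ?_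
    fin_cases i <;> simp <;> positivity
  · have hM : (-(P⁻¹ * B * Bᵀ * P⁻¹)) - (Aᵀ * P⁻¹ + P⁻¹ * A + Nᵀ * P⁻¹ * N)
        = Matrix.diagonal ![0, 2 * a ^ 2 * p] := by
      rw [hPinv]
      ext i j
      fin_cases i <;> fin_cases j <;>
        simp [A, N, B, Matrix.mul_apply, Fin.sum_univ_two, Fin.sum_univ_one,
          Matrix.transpose_apply, Matrix.vecHead, Matrix.vecTail, Matrix.vecMul, dotProduct] <;>
        nlinarith [hs2]
    rw [hM]
    refine Matrix.posSemidef_diagonal_iff.mpr fun i => ?_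
    fin_cases i <;> simp <;> positivity
end
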